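/- For any L > 0, any k_i ≠ 0, and any k_p, k_d ∈ ℝ, there exists c ∈ (0, L] such that the polynomial λ⁴ − c·λ³ − k_d·λ² − k_p·λ − k_i has four pairwise distinct roots in ℂ (equivalently, it is squarefree over ℂ). -/

import Mathlib

open Polynomial

theorem quartic_distinct_roots
    (L kp ki kd : ℝ) (hL : 0 < L) (hki : ki ≠ 0) :
    ∃ c : ℝ, 0 < c ∧ c ≤ L ∧
      (X ^ 4 - C (c : ℂ) * X ^ 3 - C (kd : ℂ) * X ^ 2
        - C (kp : ℂ) * X - C (ki : ℂ)).roots.toFinset.card = 4 := by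
  -- the "resolvent" whose roots parametrize bad values of c
  set r : ℂ[X] := X ^ 4 + C (kd : ℂ) * X ^ 2 + C (2 * kp : ℂ) * X + C (3 * ki : ℂ) with hr
  set B : Finset ℂ :=
    (r.roots.map (fun α : ℂ => (α ^ 4 - (kd:ℂ) * α ^ 2 - (kp:ℂ) * α - (ki:ℂ)) / α ^ 3)).toFinset with hB
  have hTfin : {x : ℝ | (x : ℂ) ∈ B}.Finite := by
    have : {x : ℝ | (x : ℂ) ∈ B} = (fun x : ℝ => (x : ℂ)) ⁻¹' ↑B := rfl
    rw [this]
    exact B.finite_toSet.preimage (fun a _ b _ h => by exact_mod_cast h)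
  have hex : ((Set.Ioc (0 : ℝ) L) \ {x : ℝ | (x : ℂ) ∈ B}).Nonempty :=
    ((Set.Ioc_infinite hL).diff hTfin).nonempty
  obtain ⟨c, ⟨hc0, hcL⟩, hcB⟩ := hex
  refine ⟨c, hc0, hcL, ?_⟩
  set p : ℂ[X] := X ^ 4 - C (c : ℂ) * X ^ 3 - C (kd : ℂ) * X ^ 2
      - C (kp : ℂ) * X - C (ki : ℂ) with hp
  have hpdeg : p.natDegree = 4 := by
    rw [hp]; compute_degree!
  have hpne : p ≠ 0 := by
    intro h
    rw [h] at hpdeg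
    simp at hpdeg
  have hsep : p.Separable := by
    rw [Polynomial.Separable,
      Polynomial.isCoprime_iff_aeval_ne_zero_of_isAlgClosed (k := ℂ) ℂ]
    intro a
    by_contra h
    push_neg at h
    obtain ⟨h1, h2⟩ := h
    have e1 : a ^ 4 - c * a ^ 3 - kd * a ^ 2 - kp * a - ki = 0 := by
      simpa [hp] using h1
    have e2 : 4 * a ^ 3 - 3 * (c : ℂ) * a ^ 2 - 2 * (kd : ℂ) * a - (kp : ℂ) = 0 := by
      have hd : p.derivative = C 4 * X ^ 3 - C 3 * C (c : ℂ) * X ^ 2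
          - C 2 * C (kd : ℂ) * X - C (kp : ℂ) := by
        rw [hp]; simp [derivative_pow]; ring
      rw [hd] at h2
      simp only [map_sub, map_mul, map_pow, aeval_C, aeval_X,
        Algebra.algebraMap_self, RingHom.id_apply] at h2
      linear_combination h2
    have ha0 : a ≠ 0 := by
      intro h0
      rw [h0] at e1
      simp at e1
      exact hki (by exact_mod_cast e1)
    have hroot : a ∈ r.roots := by
      have hrne : r ≠ 0 := by
        intro h
        have : r.natDegree = 4 := by rw [hr]; compute_degree!
        rw [h] at this; simp at this
      rw [Polynomial.mem_roots hrne]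
      show r.eval a = 0
      simp only [hr, eval_add, eval_mul, eval_pow, eval_X, eval_C]
      linear_combination a * e2 - 3 * e1
    have hcval : (c : ℂ) ∈ B := by
      rw [hB]
      rw [Multiset.mem_toFinset, Multiset.mem_map]
      refine ⟨a, hroot, ?_⟩
      field_simp
      linear_combination e1
    exact hcB hcval
  have hnodup := Polynomial.nodup_roots hsep
  have hcard : Multiset.card p.roots = 4 := by
    have hsplit : p.Splits := IsAlgClosed.splits p
    rw [← hpdeg]
    exact (Polynomial.splits_iff_card_roots.mp hsplit)
  rw [Multiset.toFinset_card_of_nodup hnodup, hcard]
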